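/- Let a(x) be a polynomial sequence of binomial type associated to a delta functional A (so A^k a_n(x) = k! δ_{n=k}). If p(x) is a nontrivial polynomial set map of binomial type, then p_S(x) = ∑_{σ ⊢ S} a_{ℓ(σ)}(x) ∏_{T ∈ σ} A p_T(x) for every finite S ⊆ V. -/

import Mathlib

open scoped Classical
open Polynomial

noncomputable section

/-- The set of set partitions of a finite set `S`. -/
def partitions {V : Type*} [DecidableEq V] (S : Finset V) :
    Finset (Finset (Finset V)) :=
  S.powerset.powerset.filter
    (fun P => (∀ T ∈ P, T ≠ ∅) ∧ P.sup id = S ∧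
      ∀ T ∈ P, ∀ U ∈ P, T ≠ U → Disjoint T U)

/-- A polynomial set map is of binomial type if
`p_S(x+y) = ∑_{T ⊎ U = S} p_T(x) p_U(y)`. -/
def BinomialType {V K : Type*} [DecidableEq V] [Field K] [CharZero K]
    (p : Finset V → Polynomial K) : Prop :=
  ∀ S : Finset V, ∀ x y : K,
    (p S).eval (x + y) = ∑ T ∈ S.powerset, (p T).eval x * (p (S \ T)).eval y

/-- The umbral product of two functionals. -/
def umbralMul {K : Type*} [Field K] (L M : Polynomial K → K) : Polynomial K → K :=
  fun f => ∑ n ∈ f.support, f.coeff n *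
    ∑ k ∈ Finset.range (n + 1), (n.choose k : K) * L (X ^ k) * M (X ^ (n - k))

/-- Umbral powers of a functional, with `A^0 f = f(0)`. -/
def umbralPow {K : Type*} [Field K] (A : Polynomial K → K) : ℕ → Polynomial K → K
  | 0 => fun f => f.eval 0
  | k + 1 => umbralMul A (umbralPow A k)

namespace BTaux

variable {K : Type*} [Field K] [CharZero K]

/-- The inner kernel of the umbral product. -/
def gfun (L M : Polynomial K → K) (n : ℕ) : K :=
  ∑ k ∈ Finset.range (n + 1), (n.choose k : K) * L (X ^ k) * M (X ^ (n - k))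

lemma umbralMul_eq_sum (L M : Polynomial K → K) (f : Polynomial K) :
    umbralMul L M f = f.sum (fun n c => c * gfun L M n) := rfl

/-- `umbralMul` bundled as a linear map in its polynomial argument. -/
def umbralMulL (L M : Polynomial K → K) : Polynomial K →ₗ[K] K where
  toFun := umbralMul L M
  map_add' f g := by
    simp only [umbralMul_eq_sum]
    exact Polynomial.sum_add_index f g _ (fun i => zero_mul _) (fun a b₁ b₂ => add_mul _ _ _)
  map_smul' c f := by
    simp only [umbralMul_eq_sum, RingHom.id_apply]
    rw [Polynomial.sum_smul_index f c (fun n a => a * gfun L M n) (fun i => zero_mul _)]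
    unfold Polynomial.sum
    rw [smul_eq_mul, Finset.mul_sum]
    exact Finset.sum_congr rfl (fun n _ => by dsimp only; ring)

/-- Umbral powers bundled as linear maps. -/
def upowL (A : Polynomial K →ₗ[K] K) : ℕ → (Polynomial K →ₗ[K] K)
  | 0 => { toFun := fun f => f.eval 0, map_add' := by simp, map_smul' := by simp }
  | k + 1 => umbralMulL (⇑A) (⇑(upowL A k))

lemma umbralPow_eq_upowL (A : Polynomial K →ₗ[K] K) (k : ℕ) :
    umbralPow (⇑A) k = ⇑(upowL A k) := by
  induction k with
  | zero => rfl
  | succ k ih =>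
    funext f
    show umbralMul (⇑A) (umbralPow (⇑A) k) f = _
    rw [ih]
    rfl

/-- The coproduct `f ↦ f(X + Y)` into `K[X][Y]`. -/
def delta : Polynomial K →+* Polynomial (Polynomial K) :=
  eval₂RingHom ((C : Polynomial K →+* Polynomial (Polynomial K)).comp (C : K →+* Polynomial K))
    (C X + X)

/-- The pairing `Φ_{L,M}(F) = ∑_j L(F_j) M(X^j)`. -/
def Phi (L M : Polynomial K →ₗ[K] K) : Polynomial (Polynomial K) →+ K where
  toFun F := F.sum (fun j c => L c * M (X ^ j))
  map_zero' := Polynomial.sum_zero_index _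
  map_add' F G := by
    show (F + G).sum (fun j c => L c * M (X ^ j))
        = F.sum (fun j c => L c * M (X ^ j)) + G.sum (fun j c => L c * M (X ^ j))
    exact Polynomial.sum_add_index F G _ (fun i => by rw [map_zero, zero_mul])
      (fun i b₁ b₂ => by rw [map_add, add_mul])

lemma eval_eval_delta (f : Polynomial K) (x y : K) :
    eval x (eval (C y) (delta f)) = f.eval (x + y) := by
  have h1 : eval (C y) (delta f) = eval₂ (C : K →+* Polynomial K) (X + C y) f := by
    show (evalRingHom (C y)) (eval₂ _ _ f) = _
    rw [Polynomial.hom_eval₂]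
    congr 1
    · ext c
      simp
    · simp
  rw [h1]
  show (evalRingHom x) (eval₂ _ _ f) = _
  rw [Polynomial.hom_eval₂]
  have h2 : (evalRingHom x).comp (C : K →+* Polynomial K) = RingHom.id K := by ext c; simp
  rw [h2]
  simp only [coe_evalRingHom, eval_add, eval_X, eval_C]
  rfl

lemma eval_eval_C_mul_map (g h : Polynomial K) (x y : K) :
    eval x (eval (C y) (C g * Polynomial.map (C : K →+* Polynomial K) h))
      = g.eval x * h.eval y := by
  rw [eval_mul, eval_C, eval_map, Polynomial.eval₂_hom, eval_mul, eval_C]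

lemma Phi_apply (L M : Polynomial K →ₗ[K] K) (F : Polynomial (Polynomial K)) :
    Phi L M F = F.sum (fun j c => L c * M (X ^ j)) := rfl

lemma Phi_C_mul_map (L M : Polynomial K →ₗ[K] K) (g h : Polynomial K) :
    Phi L M (C g * Polynomial.map (C : K →+* Polynomial K) h) = L g * M h := by
  rw [Phi_apply]
  unfold Polynomial.sum
  have hsub : (C g * Polynomial.map (C : K →+* Polynomial K) h).support ⊆ h.support := by
    intro j hj
    rw [Polynomial.mem_support_iff] at hj ⊢
    intro hc
    apply hj
    rw [coeff_C_mul, coeff_map, hc, map_zero, mul_zero]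
  rw [Finset.sum_subset hsub (fun j _ hj => by
    dsimp only
    rw [Polynomial.notMem_support_iff.mp hj, map_zero, zero_mul])]
  have hrw : ∀ j ∈ h.support, L ((C g * Polynomial.map (C : K →+* Polynomial K) h).coeff j)
      * M (X ^ j) = h.coeff j * (L g * M (X ^ j)) := by
    intro j _
    rw [coeff_C_mul, coeff_map]
    have : g * C (h.coeff j) = h.coeff j • g := by
      rw [Polynomial.smul_eq_C_mul, mul_comm]
    rw [this, map_smul, smul_eq_mul]
    ring
  rw [Finset.sum_congr rfl hrw]
  have hM : M h = ∑ j ∈ h.support, h.coeff j * M (X ^ j) := by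
    conv_lhs => rw [h.as_sum_support]
    rw [map_sum]
    refine Finset.sum_congr rfl (fun j _ => ?_)
    rw [← Polynomial.smul_X_eq_monomial, map_smul, smul_eq_mul]
  rw [hM, Finset.mul_sum]
  exact Finset.sum_congr rfl (fun j _ => by ring)

lemma Phi_delta (L M : Polynomial K →ₗ[K] K) (f : Polynomial K) :
    Phi L M (delta f) = umbralMul (⇑L) (⇑M) f := by
  induction f using Polynomial.induction_on' with
  | add p q hp hq =>
    rw [map_add, map_add, hp, hq]
    exact (map_add (umbralMulL (⇑L) (⇑M)) p q).symm
  | monomial n c =>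
    have hd : delta ((monomial n c : Polynomial K))
        = ∑ k ∈ Finset.range (n + 1),
            C (C c * ((n.choose k : K) • X ^ k)) * Polynomial.map (C : K →+* Polynomial K)
              (X ^ (n - k)) := by
      show eval₂ _ _ _ = _
      rw [Polynomial.eval₂_monomial, add_pow, Finset.mul_sum]
      refine Finset.sum_congr rfl (fun k hk => ?_)
      rw [Polynomial.map_pow, Polynomial.map_X]
      simp only [RingHom.comp_apply, Polynomial.smul_eq_C_mul, map_mul, map_pow,
        Polynomial.C_eq_natCast, map_natCast]
      ring
    rw [hd, map_sum]
    have hterm : ∀ k ∈ Finset.range (n + 1),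
        Phi L M (C (C c * ((n.choose k : K) • X ^ k)) * Polynomial.map (C : K →+* Polynomial K)
          (X ^ (n - k))) = c * ((n.choose k : K) * L (X ^ k) * M (X ^ (n - k))) := by
      intro k _
      rw [Phi_C_mul_map]
      have : C c * ((n.choose k : K) • X ^ k) = (c * (n.choose k : K)) • (X ^ k : Polynomial K) := by
        rw [Polynomial.smul_eq_C_mul, Polynomial.smul_eq_C_mul, map_mul]
        ring
      rw [this, map_smul, smul_eq_mul]
      ring
    rw [Finset.sum_congr rfl hterm, umbralMul_eq_sum,
      Polynomial.sum_monomial_index c (fun n c => c * gfun (⇑L) (⇑M) n) (zero_mul _),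
      gfun, Finset.mul_sum]

end BTaux

namespace BTaux

variable {K : Type*} [Field K] [CharZero K] {V : Type*} [DecidableEq V]

lemma delta_p (p : Finset V → Polynomial K) (hp : BinomialType p) (S : Finset V) :
    delta (p S) = ∑ T ∈ S.powerset,
      C (p T) * Polynomial.map (C : K →+* Polynomial K) (p (S \ T)) := by
  set G := ∑ T ∈ S.powerset,
      C (p T) * Polynomial.map (C : K →+* Polynomial K) (p (S \ T)) with hG
  have key : ∀ y : K, eval (C y) (delta (p S)) = eval (C y) G := by
    intro y
    apply Polynomial.funext
    intro x
    rw [eval_eval_delta, hp S x y, hG]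
    rw [Polynomial.eval_finset_sum, Polynomial.eval_finset_sum]
    exact Finset.sum_congr rfl (fun T _ => (eval_eval_C_mul_map _ _ x y).symm)
  have hsub : delta (p S) - G = 0 := by
    apply Polynomial.eq_zero_of_infinite_isRoot
    apply Set.infinite_of_injective_forall_mem
      (f := fun y : K => (C y : Polynomial K)) Polynomial.C_injective
    intro y
    show IsRoot _ _
    rw [IsRoot, eval_sub, key y, sub_self]
  exact sub_eq_zero.mp hsub

lemma umbral_split (L M : Polynomial K →ₗ[K] K) (p : Finset V → Polynomial K)
    (hp : BinomialType p) (S : Finset V) :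
    umbralMul (⇑L) (⇑M) (p S) = ∑ T ∈ S.powerset, L (p T) * M (p (S \ T)) := by
  rw [← Phi_delta, delta_p p hp S, map_sum]
  exact Finset.sum_congr rfl (fun T _ => Phi_C_mul_map L M _ _)

lemma p_eval_zero (p : Finset V → Polynomial K) (hp : BinomialType p) (hp1 : p ∅ = 1) :
    ∀ S : Finset V, S ≠ ∅ → (p S).eval 0 = 0 := by
  intro S
  induction S using Finset.strongInduction with
  | _ S ih =>
    intro hS
    have h := hp S 0 0
    rw [add_zero] at h
    have hpair : ({∅, S} : Finset (Finset V)) ⊆ S.powerset := by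
      intro T hT
      rcases Finset.mem_insert.mp hT with h' | h'
      · subst h'; simp
      · rw [Finset.mem_singleton.mp h']; simp
    have hvan : ∀ T ∈ S.powerset, T ∉ ({∅, S} : Finset (Finset V)) →
        (p T).eval 0 * (p (S \ T)).eval 0 = 0 := by
      intro T hT hT2
      simp only [Finset.mem_insert, Finset.mem_singleton, not_or] at hT2
      rw [ih T (Finset.ssubset_iff_subset_ne.mpr ⟨Finset.mem_powerset.mp hT, hT2.2⟩) hT2.1,
        zero_mul]
    rw [← Finset.sum_subset hpair hvan, Finset.sum_pair (Ne.symm hS), hp1, Finset.sdiff_empty,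
      Finset.sdiff_self, hp1] at h
    simp only [eval_one, one_mul, mul_one] at h
    exact right_eq_add.mp h

lemma mem_partitions {S : Finset V} {P : Finset (Finset V)} :
    P ∈ partitions S ↔ (∀ T ∈ P, T ⊆ S) ∧ (∀ T ∈ P, T ≠ ∅) ∧ P.sup id = S ∧
      (∀ T ∈ P, ∀ U ∈ P, T ≠ U → Disjoint T U) := by
  unfold partitions
  rw [Finset.mem_filter, Finset.mem_powerset]
  constructor
  · rintro ⟨h1, h2, h3, h4⟩
    exact ⟨fun T hT => Finset.mem_powerset.mp (h1 hT), h2, h3, h4⟩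
  · rintro ⟨h1, h2, h3, h4⟩
    exact ⟨fun T hT => Finset.mem_powerset.mpr (h1 T hT), h2, h3, h4⟩

lemma empty_mem_partitions_iff {S : Finset V} :
    (∅ : Finset (Finset V)) ∈ partitions S ↔ S = ∅ := by
  rw [mem_partitions]
  simp [eq_comm]

lemma card_le_of_mem_partitions {S : Finset V} {P : Finset (Finset V)}
    (h : P ∈ partitions S) : P.card ≤ S.card := by
  rw [mem_partitions] at h
  obtain ⟨h1, h2, h3, h4⟩ := h
  have hS : S = P.biUnion (fun T => T) := by rw [← h3, Finset.sup_eq_biUnion]; rfl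
  rw [hS, Finset.card_biUnion (fun T hT U hU hne => h4 T hT U hU hne)]
  calc P.card = ∑ _T ∈ P, 1 := by simp
    _ ≤ ∑ T ∈ P, (id T).card := by
        refine Finset.sum_le_sum (fun T hT => ?_)
        exact Finset.card_pos.mpr (Finset.nonempty_iff_ne_empty.mpr (h2 T hT))

lemma insert_partitions {S T : Finset V} (hTS : T ⊆ S) (hTne : T ≠ ∅)
    {P : Finset (Finset V)} (hP : P ∈ partitions (S \ T)) :
    insert T P ∈ partitions S ∧ T ∉ P := by
  rw [mem_partitions] at hP
  obtain ⟨h1, h2, h3, h4⟩ := hP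
  have hTP : T ∉ P := by
    intro hT
    have := (Finset.subset_sdiff.mp (h1 T hT)).2
    exact hTne (by simpa using disjoint_self.mp this)
  have hdisjT : ∀ U ∈ P, Disjoint T U := by
    intro U hU
    exact Finset.disjoint_sdiff.mono_right (h1 U hU)
  refine ⟨mem_partitions.mpr ⟨?_, ?_, ?_, ?_⟩, hTP⟩
  · intro U hU
    rcases Finset.mem_insert.mp hU with h' | h'
    · exact h' ▸ hTS
    · exact (h1 U h').trans (Finset.sdiff_subset)
  · intro U hU
    rcases Finset.mem_insert.mp hU with h' | h'
    · exact h' ▸ hTne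
    · exact h2 U h'
  · rw [Finset.sup_insert, h3, id]
    exact Finset.union_sdiff_of_subset hTS
  · intro U hU W hW hne
    rcases Finset.mem_insert.mp hU with h' | h' <;>
      rcases Finset.mem_insert.mp hW with h'' | h''
    · exact absurd (h'.trans h''.symm) hne
    · subst h'; exact hdisjT W h''
    · subst h''; exact (hdisjT U h').symm
    · exact h4 U h' W h'' hne

lemma erase_partitions {S : Finset V} {Q : Finset (Finset V)} (hQ : Q ∈ partitions S)
    {T : Finset V} (hT : T ∈ Q) : Q.erase T ∈ partitions (S \ T) := by
  rw [mem_partitions] at hQ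
  obtain ⟨h1, h2, h3, h4⟩ := hQ
  have hsubs : ∀ U ∈ Q.erase T, U ⊆ S \ T := by
    intro U hU
    obtain ⟨hne, hUQ⟩ := Finset.mem_erase.mp hU
    exact Finset.subset_sdiff.mpr ⟨h1 U hUQ, (h4 U hUQ T hT hne)⟩
  refine mem_partitions.mpr ⟨hsubs, fun U hU => h2 U (Finset.mem_erase.mp hU).2, ?_, ?_⟩
  · apply Finset.Subset.antisymm
    · exact Finset.sup_le (fun U hU => hsubs U hU)
    · intro x hx
      obtain ⟨hxS, hxT⟩ := Finset.mem_sdiff.mp hx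
      rw [← h3] at hxS
      obtain ⟨U, hUQ, hxU⟩ := Finset.mem_sup.mp hxS
      have hUT : U ≠ T := fun h => hxT (h ▸ hxU)
      exact Finset.mem_sup.mpr ⟨U, Finset.mem_erase.mpr ⟨hUT, hUQ⟩, hxU⟩
  · intro U hU W hW hne
    exact h4 U (Finset.mem_erase.mp hU).2 W (Finset.mem_erase.mp hW).2 hne

lemma sigma_mk_eq {α β : Type*} {a c : α} {b d : β} (h1 : a = c) (h2 : b = d) :
    (⟨a, b⟩ : Σ _ : α, β) = ⟨c, d⟩ := by subst h1; subst h2; rfl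

lemma sum_partitions_succ {K : Type*} [Field K] (w : Finset V → K) (S : Finset V) (k : ℕ) :
    ∑ T ∈ S.powerset.filter (· ≠ ∅), w T *
        ∑ P ∈ (partitions (S \ T)).filter (fun P => P.card = k), ∏ U ∈ P, w U
      = (k + 1 : K) * ∑ Q ∈ (partitions S).filter (fun Q => Q.card = k + 1), ∏ U ∈ Q, w U := by
  have hrhs : (k + 1 : K) * ∑ Q ∈ (partitions S).filter (fun Q => Q.card = k + 1), ∏ U ∈ Q, w U
      = ∑ Q ∈ (partitions S).filter (fun Q => Q.card = k + 1), ∑ T ∈ Q, ∏ U ∈ Q, w U := by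
    rw [Finset.mul_sum]
    refine Finset.sum_congr rfl (fun Q hQ => ?_)
    obtain ⟨_, hcard⟩ := Finset.mem_filter.mp hQ
    rw [Finset.sum_const, hcard, nsmul_eq_mul]
    push_cast
    ring
  rw [hrhs]
  have hlhs : ∀ T ∈ S.powerset.filter (· ≠ ∅),
      w T * ∑ P ∈ (partitions (S \ T)).filter (fun P => P.card = k), ∏ U ∈ P, w U
      = ∑ P ∈ (partitions (S \ T)).filter (fun P => P.card = k), w T * ∏ U ∈ P, w U :=
    fun T _ => Finset.mul_sum _ _ _
  rw [Finset.sum_congr rfl hlhs, Finset.sum_sigma', Finset.sum_sigma']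
  refine Finset.sum_bij' (fun a _ => (⟨insert a.1 a.2, a.1⟩ : Σ _ : Finset (Finset V), Finset V))
    (fun b _ => (⟨b.2, b.1.erase b.2⟩ : Σ _ : Finset V, Finset (Finset V)))
    ?_ ?_ ?_ ?_ ?_
  · rintro ⟨T, P⟩ ha
    obtain ⟨hT, hP⟩ := Finset.mem_sigma.mp ha
    obtain ⟨hTS, hTne⟩ := Finset.mem_filter.mp hT
    rw [Finset.mem_powerset] at hTS
    obtain ⟨hPmem, hPcard⟩ := Finset.mem_filter.mp hP
    obtain ⟨hins, hTP⟩ := insert_partitions hTS hTne hPmem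
    refine Finset.mem_sigma.mpr ⟨Finset.mem_filter.mpr ⟨hins, ?_⟩, Finset.mem_insert_self _ _⟩
    rw [Finset.card_insert_of_notMem hTP, hPcard]
  · rintro ⟨Q, T⟩ hb
    obtain ⟨hQ, hTQ⟩ := Finset.mem_sigma.mp hb
    obtain ⟨hQmem, hQcard⟩ := Finset.mem_filter.mp hQ
    have hmem := mem_partitions.mp hQmem
    refine Finset.mem_sigma.mpr ⟨Finset.mem_filter.mpr ⟨Finset.mem_powerset.mpr
      (hmem.1 T hTQ), hmem.2.1 T hTQ⟩, Finset.mem_filter.mpr ⟨erase_partitions hQmem hTQ, ?_⟩⟩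
    rw [Finset.card_erase_of_mem hTQ, hQcard]
    omega
  · rintro ⟨T, P⟩ ha
    obtain ⟨hT, hP⟩ := Finset.mem_sigma.mp ha
    obtain ⟨hTS, hTne⟩ := Finset.mem_filter.mp hT
    rw [Finset.mem_powerset] at hTS
    obtain ⟨hPmem, _⟩ := Finset.mem_filter.mp hP
    obtain ⟨_, hTP⟩ := insert_partitions hTS hTne hPmem
    exact sigma_mk_eq rfl (Finset.erase_insert hTP)
  · rintro ⟨Q, T⟩ hb
    obtain ⟨hQ, hTQ⟩ := Finset.mem_sigma.mp hb
    exact sigma_mk_eq (Finset.insert_erase hTQ) rfl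
  · rintro ⟨T, P⟩ ha
    obtain ⟨hT, hP⟩ := Finset.mem_sigma.mp ha
    obtain ⟨hTS, hTne⟩ := Finset.mem_filter.mp hT
    rw [Finset.mem_powerset] at hTS
    obtain ⟨hPmem, _⟩ := Finset.mem_filter.mp hP
    obtain ⟨_, hTP⟩ := insert_partitions hTS hTne hPmem
    exact (Finset.prod_insert hTP).symm


lemma filter_card_zero (S : Finset V) :
    (partitions S).filter (fun P => P.card = 0)
      = if S = ∅ then {(∅ : Finset (Finset V))} else ∅ := by
  have h1 : (partitions S).filter (fun P => P.card = 0)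
      = (partitions S).filter (fun P => P = ∅) := by
    apply Finset.filter_congr
    intro P _
    simp [Finset.card_eq_zero]
  rw [h1, Finset.filter_eq' (partitions S) ∅]
  by_cases hS : S = ∅
  · rw [if_pos (empty_mem_partitions_iff.mpr hS), if_pos hS]
  · rw [if_neg (fun h => hS (empty_mem_partitions_iff.mp h)), if_neg hS]

lemma upow_p (A : Polynomial K →ₗ[K] K) (hA1 : A 1 = 0)
    (p : Finset V → Polynomial K) (hp : BinomialType p) (hp1 : p ∅ = 1) :
    ∀ (k : ℕ) (S : Finset V), upowL A k (p S)
      = (k.factorial : K) *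
          ∑ P ∈ (partitions S).filter (fun P => P.card = k), ∏ T ∈ P, A (p T) := by
  intro k
  induction k with
  | zero =>
    intro S
    show (p S).eval 0 = _
    rw [filter_card_zero]
    by_cases hS : S = ∅
    · rw [if_pos hS, hS, hp1]
      simp
    · rw [if_neg hS, p_eval_zero p hp hp1 S hS]
      simp
  | succ k ih =>
    intro S
    show umbralMul (⇑A) (⇑(upowL A k)) (p S) = _
    rw [umbral_split A (upowL A k) p hp S]
    rw [← Finset.sum_filter_of_ne (p := fun T => T ≠ ∅) (fun T _ hne h => by
      apply hne
      rw [h, hp1, hA1, zero_mul])]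
    have h1 : ∀ T ∈ S.powerset.filter (· ≠ ∅),
        A (p T) * upowL A k (p (S \ T))
          = (k.factorial : K) * (A (p T) *
              ∑ P ∈ (partitions (S \ T)).filter (fun P => P.card = k), ∏ U ∈ P, A (p U)) := by
      intro T _
      rw [ih (S \ T)]
      ring
    rw [Finset.sum_congr rfl h1, ← Finset.mul_sum,
      sum_partitions_succ (fun T => A (p T)) S k, Nat.factorial_succ]
    push_cast
    ring

lemma exists_rep (a : ℕ → Polynomial K) (hdeg : ∀ n, (a n).degree = n) :
    ∀ (n : ℕ) (f : Polynomial K), f.degree < (n : ℕ) →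
      ∃ c : ℕ → K, f = ∑ k ∈ Finset.range n, C (c k) * a k := by
  intro n
  induction n with
  | zero =>
    intro f hf
    refine ⟨fun _ => 0, ?_⟩
    rw [Finset.range_zero, Finset.sum_empty]
    exact Polynomial.ext fun m => by
      simpa using (Polynomial.degree_lt_iff_coeff_zero f 0).mp hf m (Nat.zero_le m)
  | succ n ihn =>
    intro f hf
    have hd : (a n).coeff n ≠ 0 := Polynomial.coeff_ne_zero_of_eq_degree (hdeg n)
    set e := f.coeff n / (a n).coeff n with he
    have hg : (f - C e * a n).degree < (n : ℕ) := by
      rw [Polynomial.degree_lt_iff_coeff_zero]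
      intro m hm
      rcases eq_or_lt_of_le hm with h | h
      · rw [← h]
        simp [Polynomial.coeff_sub, Polynomial.coeff_C_mul, he, div_mul_cancel₀ _ hd]
      · have hf1 : f.coeff m = 0 := Polynomial.coeff_eq_zero_of_degree_lt
          (lt_of_lt_of_le hf (by exact_mod_cast h))
        have hf2 : (a n).coeff m = 0 := Polynomial.coeff_eq_zero_of_degree_lt
          (by rw [hdeg n]; exact_mod_cast h)
        simp [Polynomial.coeff_sub, Polynomial.coeff_C_mul, hf1, hf2]
    obtain ⟨c, hc⟩ := ihn _ hg
    refine ⟨fun j => if j = n then e else c j, ?_⟩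
    rw [Finset.sum_range_succ]
    dsimp only
    rw [if_pos rfl,
      Finset.sum_congr rfl (fun j hj => by
        rw [if_neg (Nat.ne_of_lt (Finset.mem_range.mp hj))]), ← hc]
    ring

lemma upow_rep (A : Polynomial K →ₗ[K] K) (a : ℕ → Polynomial K)
    (hassoc : ∀ k n : ℕ,
      umbralPow (⇑A) k (a n) = if n = k then (k.factorial : K) else 0)
    {n : ℕ} {c : ℕ → K} {f : Polynomial K}
    (hf : f = ∑ k ∈ Finset.range n, C (c k) * a k) (j : ℕ) :
    upowL A j f = if j ∈ Finset.range n then c j * (j.factorial : K) else 0 := by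
  rw [hf, map_sum]
  have h1 : ∀ k ∈ Finset.range n,
      upowL A j (C (c k) * a k) = if k = j then c k * (j.factorial : K) else 0 := by
    intro k _
    rw [← Polynomial.smul_eq_C_mul, map_smul, smul_eq_mul, ← umbralPow_eq_upowL, hassoc j k,
      mul_ite, mul_zero]
  rw [Finset.sum_congr rfl h1, Finset.sum_ite_eq' (Finset.range n) j
    (fun k => c k * (j.factorial : K))]

end BTaux

theorem binomialType_expansion {V K : Type*} [DecidableEq V] [Field K] [CharZero K]
    (a : ℕ → Polynomial K) (hdeg : ∀ n, (a n).degree = n)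
    (hbin : ∀ n : ℕ, ∀ x y : K,
      (a n).eval (x + y) =
        ∑ k ∈ Finset.range (n + 1), (n.choose k : K) * (a k).eval x * (a (n - k)).eval y)
    (A : Polynomial K →ₗ[K] K) (hA1 : A 1 = 0) (hAX : A X ≠ 0)
    (hassoc : ∀ k n : ℕ,
      umbralPow (⇑A) k (a n) = if n = k then (k.factorial : K) else 0)
    (p : Finset V → Polynomial K) (hp : BinomialType p) (hp1 : p ∅ = 1) :
    ∀ S : Finset V,
      p S = ∑ P ∈ partitions S, Polynomial.C (∏ T ∈ P, A (p T)) * a P.card := by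
  intro S
  set N := max (p S).natDegree S.card with hN
  have hdegS : (p S).degree < ((N + 1 : ℕ) : WithBot ℕ) :=
    lt_of_le_of_lt Polynomial.degree_le_natDegree
      (by exact_mod_cast Nat.lt_succ_of_le (le_max_left _ _))
  obtain ⟨c, hc⟩ := BTaux.exists_rep a hdeg (N + 1) (p S) hdegS
  have hcoeff : ∀ j, j ∈ Finset.range (N + 1) →
      c j = ∑ P ∈ (partitions S).filter (fun P => P.card = j), ∏ T ∈ P, A (p T) := by
    intro j hj
    have h1 := BTaux.upow_rep A a hassoc hc j
    rw [if_pos hj] at h1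
    have h2 := BTaux.upow_p A hA1 p hp hp1 j S
    have h3 : c j * (j.factorial : K)
        = (j.factorial : K) * ∑ P ∈ (partitions S).filter (fun P => P.card = j),
            ∏ T ∈ P, A (p T) := h1.symm.trans h2
    have hj' : (j.factorial : K) ≠ 0 := Nat.cast_ne_zero.mpr (Nat.factorial_ne_zero j)
    field_simp at h3
    exact mul_left_cancel₀ hj' (by rw [← h3])
  have hmap : ∀ P ∈ partitions S, P.card ∈ Finset.range (N + 1) := fun P hP =>
    Finset.mem_range.mpr (Nat.lt_succ_of_le
      ((BTaux.card_le_of_mem_partitions hP).trans (le_max_right _ _)))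
  rw [← Finset.sum_fiberwise_of_maps_to hmap
    (fun P => Polynomial.C (∏ T ∈ P, A (p T)) * a P.card), hc]
  refine Finset.sum_congr rfl (fun j hj => ?_)
  rw [hcoeff j hj, map_sum, Finset.sum_mul]
  refine Finset.sum_congr rfl (fun P hP => ?_)
  rw [(Finset.mem_filter.mp hP).2]
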